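/- arXiv:1310.6543 — 2 statements merged into one kernel-verified Lean document; each statement's English description precedes it below -/
import Mathlib

section
/- Every vertex-transitive graph admitting an edge-transitive but not arc-transitive group of automorphisms has even valence. -/
/-- `g` is an automorphism of the digraph with arc relation `A`. -/
def IsDigraphAut {V : Type*} (A : V → V → Prop) (g : Equiv.Perm V) : Prop :=
  ∀ u v : V, A u v ↔ A (g u) (g v)

/-- `G` acts transitively on the vertex set. -/
def IsVertexTrans {V : Type*} (G : Subgroup (Equiv.Perm V)) : Prop :=
  ∀ u v : V, ∃ g ∈ G, g u = v

/-- `G` acts transitively on the arcs of the (di)graph with arc relation `A`. -/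
def IsArcTrans {V : Type*} (A : V → V → Prop) (G : Subgroup (Equiv.Perm V)) : Prop :=
  ∀ u v x y : V, A u v → A x y → ∃ g ∈ G, g u = x ∧ g v = y

/-- `G` acts transitively on the edges (unordered pairs) of the graph with arc relation `A`. -/
def IsEdgeTrans {V : Type*} (A : V → V → Prop) (G : Subgroup (Equiv.Perm V)) : Prop :=
  ∀ u v x y : V, A u v → A x y → ∃ g ∈ G, (g u = x ∧ g v = y) ∨ (g u = y ∧ g v = x)

/-- The digraph with arc relation `A` is connected (its underlying graph is connected). -/
def DConnected {V : Type*} (A : V → V → Prop) : Prop :=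
  ∀ u v : V, Relation.ReflTransGen (fun a b => A a b ∨ A b a) u v

/-- Every vertex-transitive graph admitting an edge-transitive but not arc-transitive
group of automorphisms has even valence. -/
theorem stmt0 {V : Type*} [Finite V] (A : V → V → Prop)
    (hirr : ∀ v : V, ¬ A v v) (hsym : ∀ u v : V, A u v → A v u)
    (G : Subgroup (Equiv.Perm V))
    (haut : ∀ g ∈ G, IsDigraphAut A g)
    (hvt : IsVertexTrans G) (het : IsEdgeTrans A G) (hnat : ¬ IsArcTrans A G) :
    ∀ v : V, Even {u : V | A v u}.ncard := by
  classical
  have : Fintype V := Fintype.ofFinite V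
  -- there exists an arc
  obtain ⟨a, b, hab⟩ : ∃ a b, A a b := by
    by_contra h
    push_neg at h
    exact hnat fun u v x y huv _ => absurd huv (h u v)
  have : Nonempty V := ⟨a⟩
  set R : V → V → Prop := fun u v => ∃ g ∈ G, g a = u ∧ g b = v with hRdef
  have hRA : ∀ u v, R u v → A u v := by
    rintro u v ⟨g, hg, rfl, rfl⟩
    exact (haut g hg a b).mp hab
  have hAR : ∀ u v, A u v → R u v ∨ R v u := by
    intro u v huv
    obtain ⟨g, hg, hor⟩ := het u v a b huv hab
    rcases hor with ⟨h1, h2⟩ | ⟨h1, h2⟩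
    · left
      exact ⟨g⁻¹, inv_mem hg, by rw [← h1]; simp, by rw [← h2]; simp⟩
    · right
      exact ⟨g⁻¹, inv_mem hg, by rw [← h2]; simp, by rw [← h1]; simp⟩
  -- R is G-invariant
  have hGinv : ∀ g ∈ G, ∀ u v, R u v → R (g u) (g v) := by
    rintro g hg u v ⟨k, hk, rfl, rfl⟩
    exact ⟨g * k, mul_mem hg hk, rfl, rfl⟩
  -- no edge has both orientations in R
  have hnotboth : ∀ u v, R u v → R v u → False := by
    rintro u v ⟨g, hg, hg1, hg2⟩ ⟨h, hh, hh1, hh2⟩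
    apply hnat
    -- first: (a,b) and (b,a) in same orbit, hence every arc is in R
    have hflip : R b a := by
      refine ⟨g⁻¹ * h, mul_mem (inv_mem hg) hh, ?_, ?_⟩
      · simp only [Equiv.Perm.mul_apply, hh1, ← hg2]; simp
      · simp only [Equiv.Perm.mul_apply, hh2, ← hg1]; simp
    have hall : ∀ p q, A p q → R p q := by
      intro p q hpq
      rcases hAR p q hpq with h1 | h1
      · exact h1
      · obtain ⟨k, hk, hk1, hk2⟩ := h1
        obtain ⟨s, hs, hs1, hs2⟩ := hflip
        refine ⟨k * s, mul_mem hk hs, ?_, ?_⟩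
        · simp [Equiv.Perm.mul_apply, hs1, hk2]
        · simp [Equiv.Perm.mul_apply, hs2, hk1]
    intro p q x y hpq hxy
    obtain ⟨g1, hg1', hg1a, hg1b⟩ := hall p q hpq
    obtain ⟨g2, hg2', hg2a, hg2b⟩ := hall x y hxy
    refine ⟨g2 * g1⁻¹, mul_mem hg2' (inv_mem hg1'), ?_, ?_⟩
    · simp [Equiv.Perm.mul_apply, ← hg1a, hg2a]
    · simp [Equiv.Perm.mul_apply, ← hg1b, hg2b]
  -- out-degree is constant
  have hout : ∀ v w : V, {u | R v u}.ncard = {u | R w u}.ncard := by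
    intro v w
    obtain ⟨g, hg, hgv⟩ := hvt v w
    have himg : (fun x => g x) '' {u | R v u} = {u | R w u} := by
      ext x
      constructor
      · rintro ⟨u, hu, rfl⟩
        exact hgv ▸ hGinv g hg v u hu
      · intro hx
        refine ⟨g⁻¹ x, ?_, by simp⟩
        have := hGinv g⁻¹ (inv_mem hg) w x hx
        rwa [← hgv, Equiv.Perm.inv_def, Equiv.symm_apply_apply] at this
    rw [← himg, Set.ncard_image_of_injective _ g.injective]
  -- in-degree is constant
  have hin : ∀ v w : V, {u | R u v}.ncard = {u | R u w}.ncard := by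
    intro v w
    obtain ⟨g, hg, hgv⟩ := hvt v w
    have himg : (fun x => g x) '' {u | R u v} = {u | R u w} := by
      ext x
      constructor
      · rintro ⟨u, hu, rfl⟩
        exact hgv ▸ hGinv g hg u v hu
      · intro hx
        refine ⟨g⁻¹ x, ?_, by simp⟩
        have := hGinv g⁻¹ (inv_mem hg) x w hx
        rwa [← hgv, Equiv.Perm.inv_def, Equiv.symm_apply_apply] at this
    rw [← himg, Set.ncard_image_of_injective _ g.injective]
  -- ncard as filter card
  have hcard1 : ∀ v : V, {u | R v u}.ncard = (Finset.univ.filter fun u => R v u).card := by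
    intro v
    rw [Set.ncard_eq_toFinset_card']
    simp [Set.toFinset_setOf]
  have hcard2 : ∀ v : V, {u | R u v}.ncard = (Finset.univ.filter fun u => R u v).card := by
    intro v
    rw [Set.ncard_eq_toFinset_card']
    simp [Set.toFinset_setOf]
  -- double counting: out-degree = in-degree
  have hsumeq : ∑ w : V, {u | R w u}.ncard = ∑ w : V, {u | R u w}.ncard := by
    simp only [hcard1, hcard2, Finset.card_filter]
    exact Finset.sum_comm
  have hkey : ∀ v : V, {u | R v u}.ncard = {u | R u v}.ncard := by
    intro v
    have h1 : ∑ w : V, {u | R w u}.ncard = Fintype.card V * {u | R v u}.ncard := by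
      rw [Finset.sum_congr rfl (fun w _ => hout w v)]
      simp [Finset.sum_const, mul_comm]
    have h2 : ∑ w : V, {u | R u w}.ncard = Fintype.card V * {u | R u v}.ncard := by
      rw [Finset.sum_congr rfl (fun w _ => hin w v)]
      simp [Finset.sum_const, mul_comm]
    have := h1 ▸ h2 ▸ hsumeq
    exact Nat.eq_of_mul_eq_mul_left Fintype.card_pos this
  -- conclude
  intro v
  have hsplit : {u : V | A v u} = {u | R v u} ∪ {u | R u v} := by
    ext u
    simp only [Set.mem_setOf_eq, Set.mem_union]
    constructor
    · exact hAR v u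
    · rintro (h | h)
      · exact hRA _ _ h
      · exact hsym _ _ (hRA _ _ h)
  have hdisj : Disjoint {u | R v u} {u | R u v} := by
    rw [Set.disjoint_left]
    intro u h1 h2
    exact hnotboth v u h1 h2
  rw [hsplit, Set.ncard_union_eq hdisj (Set.toFinite _) (Set.toFinite _), hkey v]
  exact ⟨_, rfl⟩
end

section
/- For n ≥ 3, the wreath digraph W⃗_n, with vertex set Z_n × Z_2 and arcs ((i,a),(i+1,b)) for all i ∈ Z_n and a,b ∈ Z_2, has automorphism group isomorphic to the wreath product C_2 ≀ C_n, of order n·2^n. -/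
/-- The full automorphism group of the digraph with arc relation `A`,
as a subgroup of the permutation group of the vertex set. -/
def autSubgroup {V : Type*} (A : V → V → Prop) : Subgroup (Equiv.Perm V) where
  carrier := {g : Equiv.Perm V | ∀ u v : V, A u v ↔ A (g u) (g v)}
  one_mem' := by intro u v; simp
  mul_mem' := by
    intro a b ha hb u v
    simpa using (hb u v).trans (ha (b u) (b v))
  inv_mem' := by
    intro a ha u v
    simpa using (ha (a⁻¹ u) (a⁻¹ v)).symm

/-- The arc relation of the wreath digraph `W⃗_n` on `ZMod n × ZMod 2`:
there is an arc from `(i,a)` to `(i+1,b)` for all `i, a, b`. -/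
def wArc (n : ℕ) : (ZMod n × ZMod 2) → (ZMod n × ZMod 2) → Prop :=
  fun p q => q.1 = p.1 + 1

/-- The shift-by-`k` automorphism of the group `(C_2)^n = ZMod n → Multiplicative (ZMod 2)`. -/
def shiftEquiv (n : ℕ) (k : ZMod n) :
    (ZMod n → Multiplicative (ZMod 2)) ≃* (ZMod n → Multiplicative (ZMod 2)) where
  toFun f i := f (i + k)
  invFun f i := f (i - k)
  left_inv f := funext fun i => by simp
  right_inv f := funext fun i => by simp
  map_mul' f g := rfl

/-- The action of `C_n` on `(C_2)^n` by cyclically permuting coordinates. -/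
def shiftHom (n : ℕ) :
    Multiplicative (ZMod n) →* MulAut (ZMod n → Multiplicative (ZMod 2)) where
  toFun k := shiftEquiv n (Multiplicative.toAdd k)
  map_one' := by
    ext f i
    simp [shiftEquiv]
  map_mul' a b := by
    ext f i
    simp [shiftEquiv, add_assoc]

/-- The wreath product `C_2 ≀ C_n = (C_2)^n ⋊ C_n`, with `C_n` cyclically
permuting the coordinates. -/
def WreathC2Cn (n : ℕ) : Type :=
  (ZMod n → Multiplicative (ZMod 2)) ⋊[shiftHom n] Multiplicative (ZMod n)

instance (n : ℕ) : Group (WreathC2Cn n) :=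
  inferInstanceAs (Group ((ZMod n → Multiplicative (ZMod 2)) ⋊[shiftHom n] Multiplicative (ZMod n)))

lemma z2_add_self (x : ZMod 2) : x + x = 0 := by revert x; decide

def wPerm (n : ℕ) (x : WreathC2Cn n) : Equiv.Perm (ZMod n × ZMod 2) where
  toFun p := (p.1 - Multiplicative.toAdd x.right,
    p.2 + Multiplicative.toAdd (x.left (p.1 - Multiplicative.toAdd x.right)))
  invFun p := (p.1 + Multiplicative.toAdd x.right, p.2 + Multiplicative.toAdd (x.left p.1))
  left_inv p := by
    simp only [add_sub_cancel_right]
    ext <;> simp [add_assoc, z2_add_self]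
  right_inv p := by
    simp only [sub_add_cancel]
    ext <;> simp [add_assoc, z2_add_self]

def wHom (n : ℕ) : WreathC2Cn n →* Equiv.Perm (ZMod n × ZMod 2) where
  toFun := wPerm n
  map_one' := by
    ext p <;> simp [wPerm] <;> rfl
  map_mul' x y := by
    ext p
    · show p.1 - Multiplicative.toAdd (x * y : WreathC2Cn n).right = _
      have : (x * y : WreathC2Cn n).right = x.right * y.right := rfl
      rw [this]
      show p.1 - (Multiplicative.toAdd x.right + Multiplicative.toAdd y.right) = _
      show _ = (p.1 - Multiplicative.toAdd y.right) - Multiplicative.toAdd x.right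
      ring
    · show (p.2 : ZMod 2) + Multiplicative.toAdd ((x * y : WreathC2Cn n).left
        (p.1 - Multiplicative.toAdd (x * y : WreathC2Cn n).right)) = _
      have h1 : (x * y : WreathC2Cn n).right = x.right * y.right := rfl
      have h2 : (x * y : WreathC2Cn n).left = x.left * (shiftHom n x.right) y.left := rfl
      rw [h1, h2]
      show p.2 + (Multiplicative.toAdd (x.left _) + Multiplicative.toAdd (y.left
        (p.1 - (Multiplicative.toAdd x.right + Multiplicative.toAdd y.right)
          + Multiplicative.toAdd x.right))) = _
      show _ = (p.2 + Multiplicative.toAdd (y.left (p.1 - Multiplicative.toAdd y.right)))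
        + Multiplicative.toAdd (x.left ((p.1 - Multiplicative.toAdd y.right)
          - Multiplicative.toAdd x.right))
      have e1 : p.1 - (Multiplicative.toAdd x.right + Multiplicative.toAdd y.right)
          + Multiplicative.toAdd x.right = p.1 - Multiplicative.toAdd y.right := by ring
      have e2 : p.1 - (Multiplicative.toAdd x.right + Multiplicative.toAdd y.right)
          = p.1 - Multiplicative.toAdd y.right - Multiplicative.toAdd x.right := by ring
      simp only [toAdd_mul, e2]; ring_nf

lemma z2_ne (a b : ZMod 2) (h : a ≠ b) : a = b + 1 := by revert a b; decide

lemma wHom_mem (n : ℕ) (x : WreathC2Cn n) : wHom n x ∈ autSubgroup (wArc n) := by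
  intro u v
  show v.1 = u.1 + 1 ↔ v.1 - Multiplicative.toAdd x.right = u.1 - Multiplicative.toAdd x.right + 1
  constructor
  · intro h; rw [h]; ring
  · intro h
    have e : u.1 - Multiplicative.toAdd x.right + 1
        = (u.1 + 1) - Multiplicative.toAdd x.right := by ring
    rw [e, sub_left_inj] at h
    exact h

lemma wHom_inj (n : ℕ) : Function.Injective (wHom n) := by
  rw [injective_iff_map_eq_one]
  rintro ⟨l, r⟩ h
  have hp : ∀ p : ZMod n × ZMod 2, wPerm n ⟨l, r⟩ p = p := fun p => congrFun (congrArg _ h) p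
  have hr : Multiplicative.toAdd r = 0 := by
    have := congrArg Prod.fst (hp (0, 0))
    simpa [wPerm] using this
  have hl : l = 1 := by
    funext i
    have := congrArg Prod.snd (hp (i, 0))
    simp only [wPerm, Equiv.coe_fn_mk, hr, sub_zero, zero_add] at this
    exact this
  have hr' : r = 1 := by
    have := congrArg Multiplicative.ofAdd hr
    simpa using this
  rw [hl, hr']
  rfl

lemma wHom_surj (n : ℕ) [NeZero n] (g : Equiv.Perm (ZMod n × ZMod 2))
    (hg : g ∈ autSubgroup (wArc n)) : ∃ x, wHom n x = g := by
  have harc : ∀ u v : ZMod n × ZMod 2, v.1 = u.1 + 1 → (g v).1 = (g u).1 + 1 :=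
    fun u v h => (hg u v).mp h
  have h1 : ∀ (i : ZMod n) (a : ZMod 2), (g (i, a)).1 = (g (i, 0)).1 := by
    intro i a
    have ha := harc (i, a) (i + 1, 0) rfl
    have h0 := harc (i, 0) (i + 1, 0) rfl
    exact add_right_cancel (ha.symm.trans h0)
  have hstep : ∀ i : ZMod n, (g (i + 1, 0)).1 = (g (i, 0)).1 + 1 :=
    fun i => harc (i, 0) (i + 1, 0) rfl
  set k : ZMod n := (g (0, 0)).1 with hk
  have hσ : ∀ i : ZMod n, (g (i, 0)).1 = i + k := by
    have hnat : ∀ m : ℕ, (g ((m : ZMod n), 0)).1 = (m : ZMod n) + k := by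
      intro m
      induction m with
      | zero => simpa using hk.symm
      | succ m ih =>
        push_cast
        rw [hstep, ih]; ring
    intro i
    obtain ⟨m, rfl⟩ := ZMod.natCast_zmod_surjective (n := n) i
    exact hnat m
  set f : ZMod n → ZMod 2 := fun i => (g (i, 0)).2 with hf
  have h2 : ∀ (i : ZMod n) (a : ZMod 2), (g (i, a)).2 = a + f i := by
    intro i a
    rcases (by revert a; decide : a = 0 ∨ a = 1) with rfl | rfl
    · simp [hf]
    · have hne : (g (i, 1)).2 ≠ (g (i, 0)).2 := by
        intro hcon
        have : g (i, (1 : ZMod 2)) = g (i, 0) := by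
          apply Prod.ext
          · rw [h1 i 1]
          · exact hcon
        have := g.injective this
        simp at this
      have := z2_ne _ _ hne
      rw [this, hf]; ring
  refine ⟨⟨fun j => Multiplicative.ofAdd (f (j - k)), Multiplicative.ofAdd (-k)⟩, ?_⟩
  refine Equiv.ext fun p => ?_
  obtain ⟨i, a⟩ := p
  have hg2 : g (i, a) = ((i + k : ZMod n), a + f i) := by
    apply Prod.ext
    · rw [h1 i a, hσ i]
    · exact h2 i a
  show ((i - -k : ZMod n), a + f (i - -k - k)) = g (i, a)
  rw [hg2]
  have e1 : i - -k - k = i := by ring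
  have e3 : i - -k = i + k := by ring
  rw [e1, e3]


noncomputable def wIso (n : ℕ) [NeZero n] : WreathC2Cn n ≃* ↥(autSubgroup (wArc n)) :=
  MulEquiv.ofBijective ((wHom n).codRestrict _ (wHom_mem n))
    ⟨fun a b hab => wHom_inj n (congrArg Subtype.val hab),
     fun y => by
      obtain ⟨x, hx⟩ := wHom_surj n y.1 y.2
      exact ⟨x, Subtype.ext hx⟩⟩

def wreathEquivProd (n : ℕ) :
    WreathC2Cn n ≃ (ZMod n → Multiplicative (ZMod 2)) × Multiplicative (ZMod n) where
  toFun x := (x.left, x.right)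
  invFun y := ⟨y.1, y.2⟩
  left_inv x := rfl
  right_inv y := rfl


/-- For `n ≥ 3`, the automorphism group of the wreath digraph `W⃗_n` is isomorphic to
the wreath product `C_2 ≀ C_n`, of order `n·2^n`. -/
theorem stmt5 (n : ℕ) (hn : 3 ≤ n) :
    Nonempty (↥(autSubgroup (wArc n)) ≃* WreathC2Cn n) ∧
    Nat.card ↥(autSubgroup (wArc n)) = n * 2 ^ n := by
  have : NeZero n := ⟨by omega⟩
  refine ⟨⟨(wIso n).symm⟩, ?_⟩
  rw [Nat.card_congr ((wIso n).symm.toEquiv.trans (wreathEquivProd n))]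
  rw [Nat.card_prod]
  have c1 : Nat.card (ZMod n → Multiplicative (ZMod 2)) = 2 ^ n := by
    rw [Nat.card_pi]
    have : ∀ j : ZMod n, Nat.card (Multiplicative (ZMod 2)) = 2 := fun _ => by
      rw [Nat.card_congr (Multiplicative.toAdd (α := ZMod 2)), Nat.card_zmod]
    rw [Finset.prod_congr rfl fun j _ => this j, Finset.prod_const, Finset.card_univ,
      ZMod.card]
  have c2 : Nat.card (Multiplicative (ZMod n)) = n := by
    rw [Nat.card_congr (Multiplicative.toAdd (α := ZMod n)), Nat.card_zmod]
  rw [c1, c2, mul_comm]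
end
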